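/- Let Φ(ρ) = Σ_i V_i ρ V_i* be a trace-preserving completely positive map on M_n, let A be a *-subalgebra of M_n, and let π : A → M_n be a *-homomorphism with Φ(AX) = π(A)Φ(X) and Φ(XA) = Φ(X)π(A) for all A ∈ A, X ∈ M_n. Then for all A ∈ A and all indices i,j, A commutes with V_i* V_j; in particular A ⊆ {V_i* V_j}'_{i,j}. -/
import Mathlib


open Matrix ComplexOrder

/-- The completely positive map with Kraus operators `V i`. -/
noncomputable def krausMap {d n m : ℕ} (V : Fin d → Matrix (Fin m) (Fin n) ℂ) :
    Matrix (Fin n) (Fin n) ℂ →ₗ[ℂ] Matrix (Fin m) (Fin m) ℂ where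
  toFun X := ∑ i, V i * X * (V i)ᴴ
  map_add' X Y := by simp [Matrix.mul_add, Matrix.add_mul, Finset.sum_add_distrib]
  map_smul' c X := by simp [Matrix.mul_smul, Matrix.smul_mul, Finset.smul_sum]

/-- The complementary map `Φ^C(ρ) = ∑_{i,j} tr(ρ V_j* V_i) E_{ij}`. -/
noncomputable def complMap {d n m : ℕ} (V : Fin d → Matrix (Fin m) (Fin n) ℂ) :
    Matrix (Fin n) (Fin n) ℂ →ₗ[ℂ] Matrix (Fin d) (Fin d) ℂ where
  toFun X := Matrix.of fun i j => (X * ((V j)ᴴ * V i)).trace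
  map_add' X Y := by
    ext i j
    simp [Matrix.add_mul]
  map_smul' c X := by
    ext i j
    simp [Matrix.smul_mul]

/-- The compression map `P_Q(X) = Q X Q`. -/
noncomputable def comprMap {n : ℕ} (Q : Matrix (Fin n) (Fin n) ℂ) :
    Matrix (Fin n) (Fin n) ℂ →ₗ[ℂ] Matrix (Fin n) (Fin n) ℂ where
  toFun X := Q * X * Q
  map_add' X Y := by simp [Matrix.mul_add, Matrix.add_mul]
  map_smul' c X := by simp [Matrix.mul_smul, Matrix.smul_mul]

/-- The orthogonal complement of a set of matrices with respect to the trace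
(Hilbert–Schmidt) inner product `⟨A, B⟩ = tr(A* B)`. -/
noncomputable def traceOrthCompl {n : ℕ} (S : Set (Matrix (Fin n) (Fin n) ℂ)) :
    Submodule ℂ (Matrix (Fin n) (Fin n) ℂ) where
  carrier := {X | ∀ A ∈ S, (Aᴴ * X).trace = 0}
  add_mem' := by
    intro a b ha hb A hA
    simp [Matrix.mul_add, ha A hA, hb A hA]
  zero_mem' := by intro A hA; simp
  smul_mem' := by
    intro c x hx A hA
    simp [Matrix.mul_smul, hx A hA]

/-- The commutant of a set of matrices, as a submodule of `M_n`. -/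
noncomputable def commutantSub {n : ℕ} (S : Set (Matrix (Fin n) (Fin n) ℂ)) :
    Submodule ℂ (Matrix (Fin n) (Fin n) ℂ) where
  carrier := {X | ∀ A ∈ S, X * A = A * X}
  add_mem' := by
    intro a b ha hb A hA
    simp [Matrix.mul_add, Matrix.add_mul, ha A hA, hb A hA]
  zero_mem' := by intro A hA; simp
  smul_mem' := by
    intro c x hx A hA
    simp [Matrix.mul_smul, Matrix.smul_mul, hx A hA]

/-- The multiplicative domain of a linear map on `M_n`, as a set. -/
noncomputable def multDomain {n m : ℕ}
    (Φ : Matrix (Fin n) (Fin n) ℂ →ₗ[ℂ] Matrix (Fin m) (Fin m) ℂ) :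
    Set (Matrix (Fin n) (Fin n) ℂ) :=
  {A | ∀ X, Φ (A * X) = Φ A * Φ X ∧ Φ (X * A) = Φ X * Φ A}

/-- if `π` is a *-homomorphism on `A` with `Φ(AX) = π(A)Φ(X)` and
`Φ(XA) = Φ(X)π(A)`, then every `A ∈ A` commutes with every `V_i* V_j`. -/
theorem stmt_6 {d n : ℕ} (V : Fin d → Matrix (Fin n) (Fin n) ℂ)
    (hV : ∑ i, (V i)ᴴ * V i = 1)
    (A : NonUnitalStarSubalgebra ℂ (Matrix (Fin n) (Fin n) ℂ))
    (π : A →ₗ[ℂ] Matrix (Fin n) (Fin n) ℂ)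
    (hπmul : ∀ a b : A, π (a * b) = π a * π b)
    (hπstar : ∀ a : A, π (star a) = (π a)ᴴ)
    (hcovl : ∀ (a : A) (X : Matrix (Fin n) (Fin n) ℂ),
      krausMap V ((a : Matrix (Fin n) (Fin n) ℂ) * X) = π a * krausMap V X)
    (hcovr : ∀ (a : A) (X : Matrix (Fin n) (Fin n) ℂ),
      krausMap V (X * (a : Matrix (Fin n) (Fin n) ℂ)) = krausMap V X * π a) :
    ∀ a : A, ∀ i j, (a : Matrix (Fin n) (Fin n) ℂ) * ((V i)ᴴ * V j) =
      ((V i)ᴴ * V j) * (a : Matrix (Fin n) (Fin n) ℂ) := by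

  -- Main intertwining lemma: `V i * a = π a * V i` for all `a ∈ A` and all `i`.
  have key : ∀ a : A, ∀ i, V i * (a : Matrix (Fin n) (Fin n) ℂ)
      = π a * V i := by
    intro a i
    set T : Fin d → Matrix (Fin n) (Fin n) ℂ :=
      fun k => V k * (a : Matrix (Fin n) (Fin n) ℂ) - π a * V k with hT
    have hstarcoe : ((star a : A) : Matrix (Fin n) (Fin n) ℂ)
        = ((a : Matrix (Fin n) (Fin n) ℂ))ᴴ := rfl
    -- the three covariance identities
    have A1 : krausMap V ((a : Matrix (Fin n) (Fin n) ℂ) *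
        ((a : Matrix (Fin n) (Fin n) ℂ))ᴴ)
        = π a * krausMap V ((a : Matrix (Fin n) (Fin n) ℂ))ᴴ := by
      have := hcovl a ((star a : A) : Matrix (Fin n) (Fin n) ℂ)
      rwa [hstarcoe] at this
    have A2 : krausMap V ((a : Matrix (Fin n) (Fin n) ℂ))ᴴ
        = krausMap V 1 * (π a)ᴴ := by
      have := hcovr (star a) 1
      rwa [hstarcoe, one_mul, hπstar] at this
    have A3 : krausMap V ((a : Matrix (Fin n) (Fin n) ℂ))
        = π a * krausMap V 1 := by
      have := hcovl a 1
      rwa [mul_one] at this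
    -- the sum of the positive matrices `T k * (T k)ᴴ` vanishes
    have hsum : ∑ k, T k * (T k)ᴴ = 0 := by
      have expand : ∀ k, T k * (T k)ᴴ
          = V k * ((a : Matrix (Fin n) (Fin n) ℂ) *
              ((a : Matrix (Fin n) (Fin n) ℂ))ᴴ) * (V k)ᴴ
            - V k * ((a : Matrix (Fin n) (Fin n) ℂ)) * (V k)ᴴ * (π a)ᴴ
            - π a * (V k * ((a : Matrix (Fin n) (Fin n) ℂ))ᴴ * (V k)ᴴ)
            + π a * (V k * 1 * (V k)ᴴ) * (π a)ᴴ := by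
        intro k
        simp only [hT, Matrix.conjTranspose_sub, Matrix.conjTranspose_mul]
        noncomm_ring
      rw [Finset.sum_congr rfl fun k _ => expand k]
      rw [Finset.sum_add_distrib, Finset.sum_sub_distrib, Finset.sum_sub_distrib,
        ← Finset.sum_mul, ← Finset.mul_sum, ← Finset.sum_mul, ← Finset.mul_sum]
      have hΦ : ∀ X : Matrix (Fin n) (Fin n) ℂ,
          ∑ k, V k * X * (V k)ᴴ = krausMap V X := fun X => rfl
      rw [hΦ, hΦ, hΦ, hΦ, A1, A2, A3]
      noncomm_ring
    -- conclude each `T k = 0`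
    have hTz : ∀ k, T k = 0 := by
      intro k
      ext p q
      have hpp : ∑ k, ∑ l, T k p l * star (T k p l) = 0 := by
        have := congrArg (fun M : Matrix (Fin n) (Fin n) ℂ => M p p) hsum
        simpa [Matrix.sum_apply, Matrix.mul_apply, Matrix.conjTranspose_apply,
          mul_comm] using this
      have hnn : ∀ k' ∈ (Finset.univ : Finset (Fin d)),
          (0:ℂ) ≤ ∑ l, T k' p l * star (T k' p l) := by
        intro k' _
        exact Finset.sum_nonneg fun l _ => mul_star_self_nonneg _
      have hinner : ∑ l, T k p l * star (T k p l) = 0 :=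
        (Finset.sum_eq_zero_iff_of_nonneg hnn).mp hpp k (Finset.mem_univ k)
      have hterm : T k p q * star (T k p q) = 0 :=
        (Finset.sum_eq_zero_iff_of_nonneg
          (fun l _ => mul_star_self_nonneg _)).mp hinner q (Finset.mem_univ q)
      have : T k p q = 0 := by
        by_contra h
        exact h (by
          have := hterm
          rw [Complex.star_def, Complex.mul_conj] at this
          exact_mod_cast Complex.normSq_eq_zero.mp (by exact_mod_cast this))
      simpa using this
    have := hTz i
    rw [hT, sub_eq_zero] at this
    exact this
  intro a i j
  -- from `key` applied to `star a`, get `a * (V i)ᴴ = (V i)ᴴ * π a`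
  have h1 : (a : Matrix (Fin n) (Fin n) ℂ) * (V i)ᴴ = (V i)ᴴ * π a := by
    have h := key (star a) i
    have hstarcoe : ((star a : A) : Matrix (Fin n) (Fin n) ℂ)
        = ((a : Matrix (Fin n) (Fin n) ℂ))ᴴ := rfl
    rw [hstarcoe, hπstar] at h
    calc (a : Matrix (Fin n) (Fin n) ℂ) * (V i)ᴴ
        = (V i * ((a : Matrix (Fin n) (Fin n) ℂ))ᴴ)ᴴ := by
          simp [Matrix.conjTranspose_mul]
      _ = ((π a)ᴴ * V i)ᴴ := by rw [h]
      _ = (V i)ᴴ * π a := by simp [Matrix.conjTranspose_mul]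
  calc (a : Matrix (Fin n) (Fin n) ℂ) * ((V i)ᴴ * V j)
      = ((a : Matrix (Fin n) (Fin n) ℂ) * (V i)ᴴ) * V j := by rw [mul_assoc]
    _ = (V i)ᴴ * (π a * V j) := by rw [h1, mul_assoc]
    _ = (V i)ᴴ * (V j * (a : Matrix (Fin n) (Fin n) ℂ)) := by rw [← key a j]
    _ = ((V i)ᴴ * V j) * (a : Matrix (Fin n) (Fin n) ℂ) := by rw [mul_assoc]
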